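/- arXiv:1805.03050 — 7 statements merged into one kernel-verified Lean document; each statement's English description precedes it below -/
import Mathlib

section
/- A representation ρ of a group G into SU(2) is reducible (admits a nontrivial invariant subspace of ℂ²) if and only if its image is an abelian subgroup of SU(2). -/
open Matrix

private lemma matrix_ext_of_mulVec {A B : Matrix (Fin 2) (Fin 2) ℂ}
    (h : ∀ x, A *ᵥ x = B *ᵥ x) : A = B := by
  ext i j
  have := congrFun (h (Pi.single j 1)) i
  simpa [mulVec_single] using this

private lemma unitary_dot (A : Matrix (Fin 2) (Fin 2) ℂ) (hA : A ∈ unitaryGroup (Fin 2) ℂ)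
    (x y : Fin 2 → ℂ) : star (A *ᵥ x) ⬝ᵥ (A *ᵥ y) = star x ⬝ᵥ y := by
  rw [star_mulVec, ← dotProduct_mulVec, mulVec_mulVec, ← star_eq_conjTranspose, hA.1, one_mulVec]

private lemma orth_mul {v u : Fin 2 → ℂ} (hv0 : v ≠ 0) (hu : star v ⬝ᵥ u = 0) :
    ∃ c : ℂ, u = c • ![-(starRingEnd ℂ) (v 1), (starRingEnd ℂ) (v 0)] := by
  simp only [dotProduct, Fin.sum_univ_two, Pi.star_apply, RCLike.star_def] at hu
  by_cases h0 : v 0 = 0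
  · have h1 : v 1 ≠ 0 := by
      intro h1; apply hv0; funext i; fin_cases i <;> assumption
    have h1' : (starRingEnd ℂ) (v 1) ≠ 0 := by simpa using h1
    have hu1 : u 1 = 0 := by
      rw [h0] at hu; simp only [map_zero, zero_mul, zero_add] at hu
      exact (mul_eq_zero.mp hu).resolve_left h1'
    refine ⟨-(u 0 / (starRingEnd ℂ) (v 1)), funext fun i => ?_⟩
    fin_cases i
    · simp only [Fin.zero_eta, Fin.isValue, Pi.smul_apply, Matrix.cons_val_zero, smul_eq_mul]
      field_simp
    · simp [hu1, h0]
  · have h0' : (starRingEnd ℂ) (v 0) ≠ 0 := by simpa using h0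
    refine ⟨u 1 / (starRingEnd ℂ) (v 0), funext fun i => ?_⟩
    fin_cases i
    · simp only [Fin.zero_eta, Fin.isValue, Pi.smul_apply, Matrix.cons_val_zero, smul_eq_mul]
      field_simp
      linear_combination hu
    · simp only [Fin.mk_one, Fin.isValue, Pi.smul_apply, Matrix.cons_val_one, Matrix.head_cons, Matrix.cons_val_zero, smul_eq_mul]
      field_simp

/-- A representation of a group `G` into `SU(2)` is reducible (admits a nontrivial
invariant subspace of `ℂ²`) if and only if its image is abelian. -/
theorem su2_reducible_iff_abelian (G : Type*) [Group G]
    (ρ : G →* Matrix.specialUnitaryGroup (Fin 2) ℂ) :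
    (∃ W : Submodule ℂ (Fin 2 → ℂ), W ≠ ⊥ ∧ W ≠ ⊤ ∧
      ∀ g : G, ∀ v ∈ W, (ρ g : Matrix (Fin 2) (Fin 2) ℂ).mulVec v ∈ W) ↔
    (∀ g h : G, ρ g * ρ h = ρ h * ρ g) := by
  constructor
  · rintro ⟨W, hbot, htop, hinv⟩ g h
    obtain ⟨v, hvW, hv0⟩ := Submodule.exists_mem_ne_zero_of_ne_bot hbot
    have hle : Submodule.span ℂ {v} ≤ W := Submodule.span_le.mpr (by simpa using hvW)
    have hlt : Module.finrank ℂ W < 2 := by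
      have := Submodule.finrank_lt htop
      simpa using this
    have hWspan : W = Submodule.span ℂ {v} :=
      (Submodule.eq_of_le_of_finrank_le hle
        (by rw [finrank_span_singleton hv0]; omega)).symm
    have heig : ∀ k : G, ∃ c : ℂ, c ≠ 0 ∧ (ρ k : Matrix (Fin 2) (Fin 2) ℂ) *ᵥ v = c • v := by
      intro k
      have hmem : (ρ k : Matrix (Fin 2) (Fin 2) ℂ) *ᵥ v ∈ Submodule.span ℂ {v} := by
        rw [← hWspan]; exact hinv k v hvW
      obtain ⟨c, hc⟩ := Submodule.mem_span_singleton.mp hmem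
      refine ⟨c, ?_, hc.symm⟩
      rintro rfl
      have h2 : (ρ k⁻¹ : Matrix (Fin 2) (Fin 2) ℂ) * (ρ k : Matrix (Fin 2) (Fin 2) ℂ) = 1 := by
        have h3 : (ρ k⁻¹) * (ρ k) = 1 := by
          rw [← _root_.map_mul, inv_mul_cancel, _root_.map_one]
        exact congrArg Subtype.val h3
      have h1 : (ρ k⁻¹ : Matrix (Fin 2) (Fin 2) ℂ) *ᵥ ((ρ k : Matrix (Fin 2) (Fin 2) ℂ) *ᵥ v) = v := by
        rw [mulVec_mulVec, h2, one_mulVec]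
      rw [← hc] at h1
      simp at h1
      exact hv0 h1.symm
    set w : Fin 2 → ℂ := ![-(starRingEnd ℂ) (v 1), (starRingEnd ℂ) (v 0)] with hw
    have hvv : star v ⬝ᵥ v ≠ 0 := by
      simp only [dotProduct, Fin.sum_univ_two, Pi.star_apply, RCLike.star_def]
      intro hsum
      apply hv0
      have h0 : Complex.normSq (v 0) + Complex.normSq (v 1) = 0 := by
        have := congrArg Complex.re hsum
        simpa [Complex.normSq, Complex.mul_re, Complex.conj_re, Complex.conj_im,
          Complex.normSq_apply] using this
      have h1 : v 0 = 0 := by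
        rw [← Complex.normSq_eq_zero]
        nlinarith [Complex.normSq_nonneg (v 0), Complex.normSq_nonneg (v 1)]
      have h2 : v 1 = 0 := by
        rw [← Complex.normSq_eq_zero]
        nlinarith [Complex.normSq_nonneg (v 0), Complex.normSq_nonneg (v 1)]
      funext i; fin_cases i <;> assumption
    have hvw : star v ⬝ᵥ w = 0 := by
      simp only [hw, dotProduct, Fin.sum_univ_two, Pi.star_apply, RCLike.star_def,
        Matrix.cons_val_zero, Matrix.cons_val_one, Matrix.head_cons]
      ring
    have heigw : ∀ k : G, ∃ d : ℂ, (ρ k : Matrix (Fin 2) (Fin 2) ℂ) *ᵥ w = d • w := by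
      intro k
      obtain ⟨c, hc0, hc⟩ := heig k
      apply orth_mul hv0
      have hU := unitary_dot (ρ k) (ρ k).2.1 v w
      rw [hc, hvw] at hU
      have hfac : star (c • v) ⬝ᵥ ((ρ k : Matrix (Fin 2) (Fin 2) ℂ) *ᵥ w)
          = (starRingEnd ℂ) c * (star v ⬝ᵥ ((ρ k : Matrix (Fin 2) (Fin 2) ℂ) *ᵥ w)) := by
        simp only [dotProduct, Fin.sum_univ_two, Pi.star_apply, Pi.smul_apply, smul_eq_mul,
          RCLike.star_def, RingHom.map_mul]
        ring
      rw [hfac] at hU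
      rcases mul_eq_zero.mp hU with h' | h'
      · exact absurd (by simpa using h' : c = 0) hc0
      · exact h'
    have hspan : ∀ u : Fin 2 → ℂ, ∃ a b : ℂ, u = a • v + b • w := by
      intro u
      set a : ℂ := (star v ⬝ᵥ u) / (star v ⬝ᵥ v) with ha
      have horth : star v ⬝ᵥ (u - a • v) = 0 := by
        rw [dotProduct_sub, dotProduct_smul, ha, smul_eq_mul, div_mul_cancel₀ _ hvv, sub_self]
      obtain ⟨b, hb⟩ := orth_mul hv0 horth
      exact ⟨a, b, by rw [← hb]; abel⟩
    obtain ⟨cg, _, hcg⟩ := heig g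
    obtain ⟨ch, _, hch⟩ := heig h
    obtain ⟨dg, hdg⟩ := heigw g
    obtain ⟨dh, hdh⟩ := heigw h
    have key : ((ρ g * ρ h : Matrix.specialUnitaryGroup (Fin 2) ℂ) : Matrix (Fin 2) (Fin 2) ℂ)
        = ((ρ h * ρ g : Matrix.specialUnitaryGroup (Fin 2) ℂ) : Matrix (Fin 2) (Fin 2) ℂ) := by
      apply matrix_ext_of_mulVec
      intro x
      obtain ⟨a, b, rfl⟩ := hspan x
      push_cast
      simp only [← mulVec_mulVec, mulVec_add, mulVec_smul, hcg, hch, hdg, hdh, smul_smul]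
      rw [mul_comm ch cg, mul_comm dh dg]
    exact Subtype.ext key
  · intro hab
    by_cases hsc : ∀ g : G, ∃ c : ℂ,
        (ρ g : Matrix (Fin 2) (Fin 2) ℂ) = c • (1 : Matrix (Fin 2) (Fin 2) ℂ)
    · refine ⟨Submodule.span ℂ {![1, 0]}, ?_, ?_, ?_⟩
      · simp only [ne_eq, Submodule.span_singleton_eq_bot]
        intro h0
        have := congrFun h0 0
        simp at this
      · intro htop
        have hmem : (![0, 1] : Fin 2 → ℂ) ∈ Submodule.span ℂ {![1, 0]} := htop ▸ Submodule.mem_top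
        obtain ⟨c, hc⟩ := Submodule.mem_span_singleton.mp hmem
        have h0 := congrFun hc 0
        have h1 := congrFun hc 1
        simp at h0 h1
      · intro g u hu
        obtain ⟨c, hc⟩ := hsc g
        rw [hc]
        have : (c • (1 : Matrix (Fin 2) (Fin 2) ℂ)) *ᵥ u = c • u := by
          simp [smul_mulVec]
        rw [this]
        exact Submodule.smul_mem _ c hu
    · push_neg at hsc
      obtain ⟨g₀, hg₀⟩ := hsc
      set f := (ρ g₀ : Matrix (Fin 2) (Fin 2) ℂ).mulVecLin with hf
      obtain ⟨μ, hμ⟩ := Module.End.exists_eigenvalue f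
      refine ⟨Module.End.eigenspace f μ, Module.End.hasEigenvalue_iff.mp hμ, ?_, ?_⟩
      · intro htop
        apply hg₀ μ
        apply matrix_ext_of_mulVec
        intro x
        have hx : x ∈ Module.End.eigenspace f μ := htop ▸ Submodule.mem_top
        rw [Module.End.mem_eigenspace_iff] at hx
        have hfx : f x = (ρ g₀ : Matrix (Fin 2) (Fin 2) ℂ) *ᵥ x := rfl
        rw [← hfx, hx]
        simp [smul_mulVec]
      · intro g u hu
        rw [Module.End.mem_eigenspace_iff] at hu ⊢
        have hcomm : (ρ g₀ : Matrix (Fin 2) (Fin 2) ℂ) * (ρ g : Matrix (Fin 2) (Fin 2) ℂ)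
            = (ρ g : Matrix (Fin 2) (Fin 2) ℂ) * (ρ g₀ : Matrix (Fin 2) (Fin 2) ℂ) := by
          simpa using congrArg Subtype.val (hab g₀ g)
        have hstep : f ((ρ g : Matrix (Fin 2) (Fin 2) ℂ) *ᵥ u)
            = (ρ g : Matrix (Fin 2) (Fin 2) ℂ) *ᵥ (f u) := by
          show (ρ g₀ : Matrix (Fin 2) (Fin 2) ℂ) *ᵥ _ = _
          rw [mulVec_mulVec, hcomm, ← mulVec_mulVec]
          rfl
        rw [hstep, hu, mulVec_smul]
end

section
/- A representation ρ : G → SL(2,ℂ) is reducible if and only if Tr ρ(γδγ⁻¹δ⁻¹) = 2 for all γ, δ ∈ G. -/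
open Matrix

/-! Helper lemmas for 2×2 matrices over ℂ. -/

private lemma det_sub_one_fin_two (C : Matrix (Fin 2) (Fin 2) ℂ) :
    (C - 1).det = C.det - C.trace + 1 := by
  simp [det_fin_two, trace_fin_two, Matrix.sub_apply, Matrix.one_apply]
  ring

private lemma trace_comm_identity (A B : Matrix (Fin 2) (Fin 2) ℂ) :
    (A * B * A.adjugate * B.adjugate).trace = 2 * A.det * B.det - (A * B - B * A).det := by
  simp [det_fin_two, trace_fin_two, adjugate_fin_two, Matrix.mul_apply, Fin.sum_univ_two,
    Matrix.sub_apply]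
  ring

private lemma exists_root_sl2 (t : ℂ) : ∃ l : ℂ, l * l - t * l + 1 = 0 := by
  obtain ⟨l, hl⟩ := IsAlgClosed.exists_root
      (Polynomial.X ^ 2 - Polynomial.C t * Polynomial.X + 1 : Polynomial ℂ) (by
    have : (Polynomial.X ^ 2 - Polynomial.C t * Polynomial.X + 1 : Polynomial ℂ).degree = 2 := by
      compute_degree!
    simp [this])
  refine ⟨l, ?_⟩
  have := hl
  simp [Polynomial.IsRoot] at this
  linear_combination this

private lemma eigenvector_of_root (A : Matrix (Fin 2) (Fin 2) ℂ) (hA : A.det = 1)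
    (l : ℂ) (hl : l * l - A.trace * l + 1 = 0) :
    ∃ v : Fin 2 → ℂ, v ≠ 0 ∧ A.mulVec v = l • v := by
  have hdet : (A - l • 1).det = 0 := by
    have h2 : A 0 0 * A 1 1 - A 0 1 * A 1 0 = 1 := by rw [← det_fin_two]; exact hA
    have h3 : A.trace = A 0 0 + A 1 1 := trace_fin_two A
    simp [det_fin_two, Matrix.sub_apply, Matrix.smul_apply, Matrix.one_apply]
    linear_combination hl + h2 + l * h3
  obtain ⟨v, hv0, hv⟩ := (Matrix.exists_mulVec_eq_zero_iff).2 hdet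
  refine ⟨v, hv0, ?_⟩
  rw [Matrix.sub_mulVec, Matrix.smul_mulVec, Matrix.one_mulVec, sub_eq_zero] at hv
  exact hv

private lemma mulVec_e0_fin_two (M : Matrix (Fin 2) (Fin 2) ℂ) :
    M.mulVec ![1, 0] = ![M 0 0, M 1 0] := by
  funext i
  fin_cases i <;> simp [Matrix.mulVec, dotProduct, Fin.sum_univ_two]

private lemma mulVec_e1_fin_two (M : Matrix (Fin 2) (Fin 2) ℂ) :
    M.mulVec ![0, 1] = ![M 0 1, M 1 1] := by
  funext i
  fin_cases i <;> simp [Matrix.mulVec, dotProduct, Fin.sum_univ_two]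

private lemma eig_col_of_upper {G : Type*} [Group G]
    (ρ : G →* Matrix.SpecialLinearGroup (Fin 2) ℂ)
    (P : Matrix (Fin 2) (Fin 2) ℂ) (hP : IsUnit P.det)
    (h : ∀ g : G, (P⁻¹ * (ρ g : Matrix (Fin 2) (Fin 2) ℂ) * P) 1 0 = 0) :
    ∀ g : G, ∃ c : ℂ, (ρ g : Matrix (Fin 2) (Fin 2) ℂ).mulVec (fun i => P i 0)
      = c • (fun i => P i 0) := by
  intro g
  set C : Matrix (Fin 2) (Fin 2) ℂ := (ρ g : Matrix (Fin 2) (Fin 2) ℂ) with hC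
  set M : Matrix (Fin 2) (Fin 2) ℂ := P⁻¹ * C * P with hM
  refine ⟨M 0 0, ?_⟩
  have hCP : C * P = P * M := by
    rw [hM, ← Matrix.mul_assoc, ← Matrix.mul_assoc, Matrix.mul_nonsing_inv _ hP, Matrix.one_mul]
  have hcol : (fun i => P i 0) = P.mulVec ![1, 0] := by
    rw [mulVec_e0_fin_two]
    funext i
    fin_cases i <;> simp
  rw [hcol, Matrix.mulVec_mulVec, hCP, ← Matrix.mulVec_mulVec, mulVec_e0_fin_two,
    ← Matrix.mulVec_smul]
  funext i
  fin_cases i <;> simp [h g, hM] <;> exact Or.inr (h g)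

private lemma reducible_of_common_eigenvector {G : Type*} [Group G]
    (ρ : G →* Matrix.SpecialLinearGroup (Fin 2) ℂ) (v : Fin 2 → ℂ) (hv : v ≠ 0)
    (h : ∀ g : G, ∃ c : ℂ, (ρ g : Matrix (Fin 2) (Fin 2) ℂ).mulVec v = c • v) :
    (∃ W : Submodule ℂ (Fin 2 → ℂ), W ≠ ⊥ ∧ W ≠ ⊤ ∧
      ∀ g : G, ∀ w ∈ W, (ρ g : Matrix (Fin 2) (Fin 2) ℂ).mulVec w ∈ W) := by
  refine ⟨Submodule.span ℂ {v}, by simpa using hv, ?_, ?_⟩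
  · intro htop
    have h1 : Module.finrank ℂ (Submodule.span ℂ {v}) = 1 := finrank_span_singleton hv
    have h2 : Module.finrank ℂ (Fin 2 → ℂ) = 2 := by simp
    rw [htop, finrank_top] at h1
    omega
  · intro g w hw
    obtain ⟨a, ha⟩ := Submodule.mem_span_singleton.1 hw
    obtain ⟨c, hc⟩ := h g
    rw [← ha, Matrix.mulVec_smul, hc, smul_smul]
    exact Submodule.smul_mem _ _ (Submodule.mem_span_singleton_self v)

/-- A representation `ρ : G → SL(2,ℂ)` is reducible if and only if
`Tr ρ(γδγ⁻¹δ⁻¹) = 2` for all `γ, δ ∈ G` (Culler–Shalen, Lemma 1.2.1). -/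
theorem sl2C_reducible_iff_trace_commutator_eq_two (G : Type*) [Group G]
    (ρ : G →* Matrix.SpecialLinearGroup (Fin 2) ℂ) :
    (∃ W : Submodule ℂ (Fin 2 → ℂ), W ≠ ⊥ ∧ W ≠ ⊤ ∧
      ∀ g : G, ∀ v ∈ W, (ρ g : Matrix (Fin 2) (Fin 2) ℂ).mulVec v ∈ W) ↔
    (∀ γ δ : G, Matrix.trace (ρ (γ * δ * γ⁻¹ * δ⁻¹) : Matrix (Fin 2) (Fin 2) ℂ) = 2) := by
  constructor
  · -- Forward direction
    rintro ⟨W, hbot, htop, hinv⟩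
    obtain ⟨v, hvW, hv0⟩ := (Submodule.ne_bot_iff W).1 hbot
    have hdim2 : Module.finrank ℂ (Fin 2 → ℂ) = 2 := by simp
    have hlt : Module.finrank ℂ W < 2 := by
      have := Submodule.finrank_lt htop
      omega
    have hspan : Submodule.span ℂ {v} = W := by
      apply Submodule.eq_of_le_of_finrank_le ((Submodule.span_singleton_le_iff_mem v W).2 hvW)
      rw [finrank_span_singleton hv0]
      have hpos : Module.finrank ℂ W ≠ 0 := by
        rw [Ne, Submodule.finrank_eq_zero]
        exact hbot
      omega
    have heig : ∀ g : G, ∃ c : ℂ, (ρ g : Matrix (Fin 2) (Fin 2) ℂ).mulVec v = c • v := by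
      intro g
      have := hinv g v hvW
      rw [← hspan] at this
      obtain ⟨a, ha⟩ := Submodule.mem_span_singleton.1 this
      exact ⟨a, ha.symm⟩
    choose c hc using heig
    have hinj : ∀ a b : ℂ, a • v = b • v → a = b := fun a b hab =>
      smul_left_injective ℂ hv0 hab
    have hcmul : ∀ g h : G, c (g * h) = c g * c h := by
      intro g h
      apply hinj
      rw [← hc (g * h), _root_.map_mul ρ, Matrix.SpecialLinearGroup.coe_mul,
        ← Matrix.mulVec_mulVec, hc h, Matrix.mulVec_smul, hc g, smul_smul, mul_comm]
    have hcone : c 1 = 1 := by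
      apply hinj
      rw [← hc 1, _root_.map_one ρ]
      simp
    have hcinv : ∀ g : G, c g * c g⁻¹ = 1 := by
      intro g
      rw [← hcmul, mul_inv_cancel, hcone]
    intro γ δ
    have hfix : (ρ (γ * δ * γ⁻¹ * δ⁻¹) : Matrix (Fin 2) (Fin 2) ℂ).mulVec v = v := by
      rw [hc]
      have hone : c (γ * δ * γ⁻¹ * δ⁻¹) = 1 := by
        rw [hcmul, hcmul, hcmul]
        have h1 := hcinv γ
        have h2 := hcinv δ
        linear_combination (c δ * c δ⁻¹) * h1 + h2
      rw [hone, one_smul]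
    set C : Matrix (Fin 2) (Fin 2) ℂ := (ρ (γ * δ * γ⁻¹ * δ⁻¹) : Matrix (Fin 2) (Fin 2) ℂ)
      with hCdef
    have hdetC : C.det = 1 := (ρ _).2
    have hker : (C - 1).mulVec v = 0 := by
      rw [Matrix.sub_mulVec, hfix, Matrix.one_mulVec, sub_self]
    have hdet0 : (C - 1).det = 0 := Matrix.exists_mulVec_eq_zero_iff.1 ⟨v, hv0, hker⟩
    have hid := det_sub_one_fin_two C
    rw [hdet0, hdetC] at hid
    linear_combination hid
  · -- Reverse direction
    intro hT
    -- Step 1: trace condition implies commutator determinant vanishes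
    have hdet1 : ∀ g : G, ((ρ g : Matrix (Fin 2) (Fin 2) ℂ)).det = 1 := fun g => (ρ g).2
    have hD : ∀ γ δ : G,
        ((ρ γ : Matrix (Fin 2) (Fin 2) ℂ) * (ρ δ : Matrix (Fin 2) (Fin 2) ℂ)
          - (ρ δ : Matrix (Fin 2) (Fin 2) ℂ) * (ρ γ : Matrix (Fin 2) (Fin 2) ℂ)).det = 0 := by
      intro γ δ
      have h := hT γ δ
      rw [_root_.map_mul ρ, _root_.map_mul ρ, _root_.map_mul ρ, map_inv ρ, map_inv ρ,
        Matrix.SpecialLinearGroup.coe_mul, Matrix.SpecialLinearGroup.coe_mul,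
        Matrix.SpecialLinearGroup.coe_mul, Matrix.SpecialLinearGroup.coe_inv,
        Matrix.SpecialLinearGroup.coe_inv, trace_comm_identity, hdet1, hdet1] at h
      linear_combination -h
    by_cases hscal : ∀ g : G, ∃ a : ℂ, (ρ g : Matrix (Fin 2) (Fin 2) ℂ) = a • 1
    · -- all scalar: every line is invariant
      apply reducible_of_common_eigenvector ρ ![1, 0] (by
        intro h
        have := congrFun h 0
        simp at this)
      intro g
      obtain ⟨a, ha⟩ := hscal g
      exact ⟨a, by rw [ha, Matrix.smul_mulVec, Matrix.one_mulVec]⟩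
    · push_neg at hscal
      obtain ⟨g₀, hg₀⟩ := hscal
      set A : Matrix (Fin 2) (Fin 2) ℂ := (ρ g₀ : Matrix (Fin 2) (Fin 2) ℂ) with hAdef
      obtain ⟨l, hl⟩ := exists_root_sl2 A.trace
      have hl0 : l ≠ 0 := by
        intro h
        rw [h] at hl
        simp at hl
      obtain ⟨v₁, hv₁0, hv₁⟩ := eigenvector_of_root A (hdet1 g₀) l hl
      by_cases hl2 : l * l = 1
      · -- Case: repeated eigenvalue (λ² = 1), A non-scalar.
        -- Pick v₂ completing v₁ to a basis.
        set v₂ : Fin 2 → ℂ := if v₁ 0 = 0 then ![1, 0] else ![0, 1] with hv₂def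
        set P : Matrix (Fin 2) (Fin 2) ℂ := Matrix.of ![![v₁ 0, v₂ 0], ![v₁ 1, v₂ 1]] with hPdef
        have hPcol0 : ∀ i, P i 0 = v₁ i := by
          intro i; fin_cases i <;> simp [hPdef]
        have hPdet : P.det ≠ 0 := by
          rw [det_fin_two]
          by_cases h0 : v₁ 0 = 0
          · have h1 : v₁ 1 ≠ 0 := by
              intro h1
              apply hv₁0
              funext i; fin_cases i <;> simp [h0, h1]
            simp [hPdef, hv₂def, h0]
            exact h1
          · simp [hPdef, hv₂def, h0]
        have hP : IsUnit P.det := isUnit_iff_ne_zero.2 hPdet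
        -- the conjugated representation
        set Mm : G → Matrix (Fin 2) (Fin 2) ℂ :=
          fun g => P⁻¹ * (ρ g : Matrix (Fin 2) (Fin 2) ℂ) * P with hMmdef
        have hPe0 : P.mulVec ![1, 0] = v₁ := by
          rw [mulVec_e0_fin_two]
          funext i; fin_cases i <;> simp [hPcol0]
        have hM₀col : (Mm g₀).mulVec ![1, 0] = l • ![1, 0] := by
          simp only [hMmdef]
          calc (P⁻¹ * A * P).mulVec ![1, 0]
              = P⁻¹.mulVec (A.mulVec (P.mulVec ![1, 0])) := by
                rw [Matrix.mulVec_mulVec, Matrix.mulVec_mulVec]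
            _ = P⁻¹.mulVec (l • v₁) := by rw [hPe0, hv₁]
            _ = l • (P⁻¹.mulVec v₁) := Matrix.mulVec_smul _ _ _
            _ = l • ![1, 0] := by
                rw [← hPe0, Matrix.mulVec_mulVec, Matrix.nonsing_inv_mul _ hP,
                  Matrix.one_mulVec]
        have hM₀00 : Mm g₀ 0 0 = l := by
          have := congrFun hM₀col 0
          rw [mulVec_e0_fin_two] at this
          simpa using this
        have hM₀10 : Mm g₀ 1 0 = 0 := by
          have := congrFun hM₀col 1
          rw [mulVec_e0_fin_two] at this
          simpa using this
        have hMdet : ∀ g : G, (Mm g).det = 1 := by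
          intro g
          simp only [hMmdef]
          rw [Matrix.det_mul, Matrix.det_mul, Matrix.det_nonsing_inv, hdet1]
          field_simp
          exact Ring.inverse_mul_cancel _ hP
        have hM₀11 : Mm g₀ 1 1 = l := by
          have hd := hMdet g₀
          rw [det_fin_two, hM₀00, hM₀10] at hd
          have : l * (Mm g₀ 1 1 - l) = 0 := by linear_combination hd - hl2
          rcases mul_eq_zero.1 this with h | h
          · exact absurd h hl0
          · exact sub_eq_zero.1 h
        have hα : Mm g₀ 0 1 ≠ 0 := by
          intro hα0
          apply hg₀ l
          have hMeq : Mm g₀ = l • 1 := by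
            ext i j
            fin_cases i <;> fin_cases j <;>
              simp [hM₀00, hM₀10, hM₀11, hα0, Matrix.one_apply]
          have hAeq : A = P * Mm g₀ * P⁻¹ := by
            simp only [hMmdef]
            rw [Matrix.mul_assoc, Matrix.mul_assoc, Matrix.mul_nonsing_inv _ hP,
              Matrix.mul_one, ← Matrix.mul_assoc, Matrix.mul_nonsing_inv _ hP, Matrix.one_mul]
          rw [hAeq, hMeq, Matrix.mul_smul, Matrix.mul_one, Matrix.smul_mul,
            Matrix.mul_nonsing_inv _ hP]
        -- conjugated commutator determinant vanishes
        have hMD : ∀ γ δ : G, (Mm γ * Mm δ - Mm δ * Mm γ).det = 0 := by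
          intro γ δ
          have hconj2 : ∀ X Y : Matrix (Fin 2) (Fin 2) ℂ,
              (P⁻¹ * X * P) * (P⁻¹ * Y * P) = P⁻¹ * (X * Y) * P := by
            intro X Y
            simp only [Matrix.mul_assoc]
            rw [← Matrix.mul_assoc P P⁻¹, Matrix.mul_nonsing_inv _ hP, Matrix.one_mul]
          have hconj : Mm γ * Mm δ - Mm δ * Mm γ
              = P⁻¹ * ((ρ γ : Matrix (Fin 2) (Fin 2) ℂ) * (ρ δ : Matrix (Fin 2) (Fin 2) ℂ)
                - (ρ δ : Matrix (Fin 2) (Fin 2) ℂ) * (ρ γ : Matrix (Fin 2) (Fin 2) ℂ)) * P := by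
            simp only [hMmdef]
            rw [hconj2, hconj2, ← Matrix.sub_mul, ← Matrix.mul_sub]
          rw [hconj, Matrix.det_mul, Matrix.det_mul, hD]
          ring
        -- every Mm g is upper triangular
        apply reducible_of_common_eigenvector ρ (fun i => P i 0) (by
          intro h
          apply hv₁0
          funext i
          rw [← hPcol0 i]
          simpa using congrFun h i)
        apply eig_col_of_upper ρ P hP
        intro g
        have hd := hMD g₀ g
        have hexp : (Mm g₀ * Mm g - Mm g * Mm g₀).det
            = -(Mm g₀ 0 1 * Mm g₀ 0 1) * (Mm g 1 0 * Mm g 1 0) := by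
          rw [det_fin_two]
          simp only [Matrix.sub_apply, Matrix.mul_apply, Fin.sum_univ_two, hM₀00, hM₀10, hM₀11]
          ring
        rw [hexp] at hd
        have : Mm g 1 0 * Mm g 1 0 = 0 := by
          rcases mul_eq_zero.1 hd with h | h
          · exfalso; apply hα
            have := neg_eq_zero.1 h
            exact (mul_self_eq_zero).1 this
          · exact h
        exact mul_self_eq_zero.1 this
      · -- Case: distinct eigenvalues l and m = l⁻¹
        set m : ℂ := l⁻¹ with hmdef
        have hlm : l * m = 1 := mul_inv_cancel₀ hl0
        have hrm : m * m - A.trace * m + 1 = 0 := by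
          rw [hmdef]
          field_simp
          linear_combination hl
        have hml : m ≠ l := by
          intro h
          rw [h] at hlm
          exact hl2 hlm
        obtain ⟨v₂, hv₂0, hv₂⟩ := eigenvector_of_root A (hdet1 g₀) m hrm
        set P : Matrix (Fin 2) (Fin 2) ℂ := Matrix.of ![![v₁ 0, v₂ 0], ![v₁ 1, v₂ 1]] with hPdef
        have hPcol0 : ∀ i, P i 0 = v₁ i := by
          intro i; fin_cases i <;> simp [hPdef]
        have hPcol1 : ∀ i, P i 1 = v₂ i := by
          intro i; fin_cases i <;> simp [hPdef]
        have hPdet : P.det ≠ 0 := by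
          intro hPdet0
          obtain ⟨u, hu0, hu⟩ := Matrix.exists_mulVec_eq_zero_iff.2 hPdet0
          have hPu : P.mulVec u = u 0 • v₁ + u 1 • v₂ := by
            funext i
            fin_cases i <;>
              simp [Matrix.mulVec, dotProduct, Fin.sum_univ_two, hPdef] <;> ring
          have h1 : u 0 • v₁ + u 1 • v₂ = 0 := by rw [← hPu, hu]
          have h2 : (u 0 * l) • v₁ + (u 1 * m) • v₂ = 0 := by
            have h2' := congrArg A.mulVec h1
            rw [Matrix.mulVec_add, Matrix.mulVec_smul, Matrix.mulVec_smul, hv₁, hv₂] at h2'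
            simpa [smul_smul, Matrix.mulVec_zero] using h2'
          have h3 : ∀ i, u 1 * (m - l) * v₂ i = 0 := by
            intro i
            have e1 := congrFun h1 i
            have e2 := congrFun h2 i
            simp only [Pi.add_apply, Pi.smul_apply, smul_eq_mul, Pi.zero_apply] at e1 e2
            linear_combination e2 - l * e1
          have hu1 : u 1 = 0 := by
            by_contra hu1
            apply hv₂0
            funext i
            have := h3 i
            rcases mul_eq_zero.1 this with h | h
            · rcases mul_eq_zero.1 h with h' | h'
              · exact absurd h' hu1
              · exact absurd (sub_eq_zero.1 h') hml
            · simpa using h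
          have hu00 : u 0 ≠ 0 := by
            obtain ⟨i, hi⟩ := Function.ne_iff.1 hu0
            fin_cases i
            · simpa using hi
            · exact absurd (by simpa using hu1) (by simpa using hi)
          apply hv₁0
          funext i
          have e1 := congrFun h1 i
          simp only [Pi.add_apply, Pi.smul_apply, smul_eq_mul, Pi.zero_apply, hu1,
            zero_mul, add_zero] at e1
          simpa using (mul_eq_zero.1 e1).resolve_left hu00
        have hP : IsUnit P.det := isUnit_iff_ne_zero.2 hPdet
        set Mm : G → Matrix (Fin 2) (Fin 2) ℂ :=
          fun g => P⁻¹ * (ρ g : Matrix (Fin 2) (Fin 2) ℂ) * P with hMmdef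
        have hPe0 : P.mulVec ![1, 0] = v₁ := by
          rw [mulVec_e0_fin_two]
          funext i; fin_cases i <;> simp [hPcol0]
        have hPe1 : P.mulVec ![0, 1] = v₂ := by
          rw [mulVec_e1_fin_two]
          funext i; fin_cases i <;> simp [hPcol1]
        have hM₀col : (Mm g₀).mulVec ![1, 0] = l • ![1, 0] := by
          simp only [hMmdef]
          calc (P⁻¹ * A * P).mulVec ![1, 0]
              = P⁻¹.mulVec (A.mulVec (P.mulVec ![1, 0])) := by
                rw [Matrix.mulVec_mulVec, Matrix.mulVec_mulVec]
            _ = P⁻¹.mulVec (l • v₁) := by rw [hPe0, hv₁]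
            _ = l • (P⁻¹.mulVec v₁) := Matrix.mulVec_smul _ _ _
            _ = l • ![1, 0] := by
                rw [← hPe0, Matrix.mulVec_mulVec, Matrix.nonsing_inv_mul _ hP,
                  Matrix.one_mulVec]
        have hM₀col1 : (Mm g₀).mulVec ![0, 1] = m • ![0, 1] := by
          simp only [hMmdef]
          calc (P⁻¹ * A * P).mulVec ![0, 1]
              = P⁻¹.mulVec (A.mulVec (P.mulVec ![0, 1])) := by
                rw [Matrix.mulVec_mulVec, Matrix.mulVec_mulVec]
            _ = P⁻¹.mulVec (m • v₂) := by rw [hPe1, hv₂]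
            _ = m • (P⁻¹.mulVec v₂) := Matrix.mulVec_smul _ _ _
            _ = m • ![0, 1] := by
                rw [← hPe1, Matrix.mulVec_mulVec, Matrix.nonsing_inv_mul _ hP,
                  Matrix.one_mulVec]
        have hM₀00 : Mm g₀ 0 0 = l := by
          have := congrFun hM₀col 0
          rw [mulVec_e0_fin_two] at this
          simpa using this
        have hM₀10 : Mm g₀ 1 0 = 0 := by
          have := congrFun hM₀col 1
          rw [mulVec_e0_fin_two] at this
          simpa using this
        have hM₀01 : Mm g₀ 0 1 = 0 := by
          have := congrFun hM₀col1 0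
          rw [mulVec_e1_fin_two] at this
          simpa using this
        have hM₀11 : Mm g₀ 1 1 = m := by
          have := congrFun hM₀col1 1
          rw [mulVec_e1_fin_two] at this
          simpa using this
        have hMdet : ∀ g : G, (Mm g).det = 1 := by
          intro g
          simp only [hMmdef]
          rw [Matrix.det_mul, Matrix.det_mul, Matrix.det_nonsing_inv, hdet1]
          field_simp
          exact Ring.inverse_mul_cancel _ hP
        have hconj2 : ∀ X Y : Matrix (Fin 2) (Fin 2) ℂ,
            (P⁻¹ * X * P) * (P⁻¹ * Y * P) = P⁻¹ * (X * Y) * P := by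
          intro X Y
          simp only [Matrix.mul_assoc]
          rw [← Matrix.mul_assoc P P⁻¹, Matrix.mul_nonsing_inv _ hP, Matrix.one_mul]
        have hMD : ∀ γ δ : G, (Mm γ * Mm δ - Mm δ * Mm γ).det = 0 := by
          intro γ δ
          have hconj : Mm γ * Mm δ - Mm δ * Mm γ
              = P⁻¹ * ((ρ γ : Matrix (Fin 2) (Fin 2) ℂ) * (ρ δ : Matrix (Fin 2) (Fin 2) ℂ)
                - (ρ δ : Matrix (Fin 2) (Fin 2) ℂ) * (ρ γ : Matrix (Fin 2) (Fin 2) ℂ)) * P := by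
            simp only [hMmdef]
            rw [hconj2, hconj2, ← Matrix.sub_mul, ← Matrix.mul_sub]
          rw [hconj, Matrix.det_mul, Matrix.det_mul, hD]
          ring
        have hMmul : ∀ g h : G, Mm (g * h) = Mm g * Mm h := by
          intro g h
          simp only [hMmdef]
          rw [hconj2, _root_.map_mul ρ, Matrix.SpecialLinearGroup.coe_mul]
        have hB : ∀ g : G, Mm g 0 1 * Mm g 1 0 = 0 := by
          intro g
          have hd := hMD g₀ g
          have hexp : (Mm g₀ * Mm g - Mm g * Mm g₀).det
              = (l - m) * (l - m) * (Mm g 0 1 * Mm g 1 0) := by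
            rw [det_fin_two]
            simp only [Matrix.sub_apply, Matrix.mul_apply, Fin.sum_univ_two, hM₀00, hM₀10,
              hM₀01, hM₀11]
            ring
          rw [hexp] at hd
          rcases mul_eq_zero.1 hd with h | h
          · exfalso
            rcases mul_eq_zero.1 h with h' | h' <;>
              exact hml (sub_eq_zero.1 h').symm
          · exact h
        by_cases hup : ∀ g : G, Mm g 1 0 = 0
        · apply reducible_of_common_eigenvector ρ (fun i => P i 0) (by
            intro h
            apply hv₁0
            funext i
            rw [← hPcol0 i]
            simpa using congrFun h i)
          apply eig_col_of_upper ρ P hP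
          simp only [hMmdef] at hup
          exact hup
        · push_neg at hup
          obtain ⟨g₁, hg₁⟩ := hup
          have hg₁01 : Mm g₁ 0 1 = 0 := (mul_eq_zero.1 (hB g₁)).resolve_right hg₁
          have hlow : ∀ g : G, Mm g 0 1 = 0 := by
            intro g
            by_contra hg01
            have hg10 : Mm g 1 0 = 0 := (mul_eq_zero.1 (hB g)).resolve_left hg01
            have hprod := hB (g * g₁)
            rw [hMmul] at hprod
            have h01 : (Mm g * Mm g₁) 0 1 = Mm g 0 1 * Mm g₁ 1 1 := by
              simp [Matrix.mul_apply, Fin.sum_univ_two, hg₁01]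
            have h10 : (Mm g * Mm g₁) 1 0 = Mm g 1 1 * Mm g₁ 1 0 := by
              simp [Matrix.mul_apply, Fin.sum_univ_two, hg10]
            rw [h01, h10] at hprod
            have d1 := hMdet g
            rw [det_fin_two, hg10] at d1
            have d2 := hMdet g₁
            rw [det_fin_two, hg₁01] at d2
            have hMg11 : Mm g 1 1 ≠ 0 := by
              intro h
              rw [h] at d1
              simp at d1
            have hMg₁11 : Mm g₁ 1 1 ≠ 0 := by
              intro h
              rw [h] at d2
              simp at d2
            rcases mul_eq_zero.1 hprod with h | h
            · rcases mul_eq_zero.1 h with h' | h'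
              · exact hg01 h'
              · exact hMg₁11 h'
            · rcases mul_eq_zero.1 h with h' | h'
              · exact hMg11 h'
              · exact hg₁ h'
          -- use the second column: conjugate by P * swap
          set S : Matrix (Fin 2) (Fin 2) ℂ := !![0, 1; 1, 0] with hSdef
          set Q : Matrix (Fin 2) (Fin 2) ℂ := P * S with hQdef
          have hSS : S * S = 1 := by
            ext i j
            fin_cases i <;> fin_cases j <;>
              simp [hSdef, Matrix.mul_apply, Fin.sum_univ_two, Matrix.one_apply]
          have hSinv : S⁻¹ = S := Matrix.inv_eq_right_inv hSS
          have hQdet : Q.det ≠ 0 := by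
            rw [hQdef, Matrix.det_mul]
            have : S.det = -1 := by simp [hSdef, det_fin_two]
            rw [this]
            simpa using hPdet
          have hQ : IsUnit Q.det := isUnit_iff_ne_zero.2 hQdet
          have hQinv : Q⁻¹ = S * P⁻¹ := by
            rw [hQdef, Matrix.mul_inv_rev, hSinv]
          have hQcol0 : ∀ i, Q i 0 = v₂ i := by
            intro i
            rw [← hPcol1 i]
            fin_cases i <;>
              simp [hQdef, hSdef, Matrix.mul_apply, Fin.sum_univ_two]
          apply reducible_of_common_eigenvector ρ (fun i => Q i 0) (by
            intro h
            apply hv₂0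
            funext i
            rw [← hQcol0 i]
            simpa using congrFun h i)
          apply eig_col_of_upper ρ Q hQ
          intro g
          have hQconj : Q⁻¹ * (ρ g : Matrix (Fin 2) (Fin 2) ℂ) * Q = S * Mm g * S := by
            rw [hQinv, hQdef]
            simp only [hMmdef, Matrix.mul_assoc]
          rw [hQconj]
          have : (S * Mm g * S) 1 0 = Mm g 0 1 := by
            simp [hSdef, Matrix.mul_apply, Fin.sum_univ_two, Matrix.vecMul,
              dotProduct]
          rw [this]
          exact hlow g
end

section
/- Column sum identity for colored Gassner matrices: let β be an automorphism of F_n fixing the product x₁x₂⋯x_n, and ψ_c : ℤ[F_n] → Λ_μ the map induced by x_i ↦ t_{c_i}. Then for each j, Σ_{i=1}^n t_{c_1}⋯t_{c_{i−1}} · ψ_c(∂(x_i β)/∂x_j) = t_{c_1}⋯t_{c_{j−1}}. -/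
noncomputable section

/-- The group `ℤ^μ` written multiplicatively. -/
abbrev LamGroup (μ : ℕ) := Multiplicative (Fin μ → ℤ)

/-- The Laurent polynomial ring `Λ_μ = ℤ[t₁^{±1}, …, t_μ^{±1}]`. -/
abbrev LamRing (μ : ℕ) := MonoidAlgebra ℤ (LamGroup μ)

/-- The unit `tᵢ` of `Λ_μ`. -/
def tVar {μ : ℕ} (i : Fin μ) : (LamRing μ)ˣ :=
  (MonoidAlgebra.of ℤ (LamGroup μ)).toHomUnits (Multiplicative.ofAdd (Pi.single i 1))

/-- The ring homomorphism `ψ_c : ℤ[F_n] → Λ_μ` induced by `x_i ↦ t_{c_i}`. -/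
def psiC {μ n : ℕ} (c : Fin n → Fin μ) :
    MonoidAlgebra ℤ (FreeGroup (Fin n)) →+* LamRing μ :=
  ((MonoidAlgebra.lift ℤ (LamRing μ) (FreeGroup (Fin n)))
    ((Units.coeHom (LamRing μ)).comp
      (FreeGroup.lift (fun i => tVar (c i))))).toRingHom

lemma take_prod_filter {M : Type*} [CommMonoid M] {n : ℕ} (g : Fin n → M) :
    ∀ i : ℕ, i ≤ n → ((List.ofFn g).take i).prod
      = ∏ k ∈ Finset.univ.filter (fun k : Fin n => (k : ℕ) < i), g k
  | 0, _ => by simp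
  | (i + 1), hi => by
    have hlt : i < (List.ofFn g).length := by simpa using hi
    rw [List.prod_take_succ _ i hlt, take_prod_filter g i (Nat.le_of_succ_le hi)]
    have hins : Finset.univ.filter (fun k : Fin n => (k : ℕ) < i + 1)
        = insert ⟨i, hi⟩ (Finset.univ.filter fun k : Fin n => (k : ℕ) < i) := by
      ext k
      simp [Fin.ext_iff]
      omega
    rw [hins, Finset.prod_insert (by simp), List.getElem_ofFn]
    exact mul_comm _ _

lemma d_one {n : ℕ} (d : FreeGroup (Fin n) → MonoidAlgebra ℤ (FreeGroup (Fin n)))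
    (h : ∀ u v, d (u * v) = d u + MonoidAlgebra.of ℤ (FreeGroup (Fin n)) u * d v) :
    d 1 = 0 := by
  have h1 := h 1 1
  rw [mul_one, map_one, one_mul] at h1
  exact left_eq_add.mp h1

lemma d_list {n : ℕ} (d : FreeGroup (Fin n) → MonoidAlgebra ℤ (FreeGroup (Fin n)))
    (h : ∀ u v, d (u * v) = d u + MonoidAlgebra.of ℤ (FreeGroup (Fin n)) u * d v) :
    ∀ l : List (FreeGroup (Fin n)),
      d l.prod = ∑ i ∈ Finset.range l.length,
        MonoidAlgebra.of ℤ (FreeGroup (Fin n)) ((l.take i).prod) * d (l.getD i 1)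
  | [] => by simp [d_one d h]
  | a :: t => by
    rw [List.prod_cons, h, d_list d h t]
    rw [List.length_cons, Finset.sum_range_succ']
    simp [List.take_succ_cons, map_mul, mul_assoc, Finset.mul_sum, add_comm, MonoidAlgebra.single_mul_single, ← MonoidAlgebra.one_def]
    exact Finset.sum_congr rfl fun i _ => by
      rw [← mul_assoc, MonoidAlgebra.single_mul_single, one_mul]

/-- Column sum identity for the colored Gassner matrix: if `β` is an automorphism
of `F_n` fixing `x₁x₂⋯x_n` with `ψ_c(x_i β) = t_{c_i}` for all `i`, then for each
`j`, `Σ_i t_{c_1}⋯t_{c_{i−1}}·ψ_c(∂(x_i β)/∂x_j) = t_{c_1}⋯t_{c_{j−1}}`. -/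
theorem gassner_column_sum {μ n : ℕ} (c : Fin n → Fin μ)
    (β : FreeGroup (Fin n) ≃* FreeGroup (Fin n))
    (hβ : ∀ i : Fin n,
      psiC c (MonoidAlgebra.of ℤ (FreeGroup (Fin n)) (β (FreeGroup.of i)))
        = (tVar (c i) : LamRing μ))
    (hfix : β (List.ofFn (fun i : Fin n => FreeGroup.of i)).prod
      = (List.ofFn (fun i : Fin n => FreeGroup.of i)).prod)
    (d : Fin n → FreeGroup (Fin n) → MonoidAlgebra ℤ (FreeGroup (Fin n)))
    (hgen : ∀ j i : Fin n, d j (FreeGroup.of i) = if i = j then 1 else 0)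
    (hprod : ∀ (j : Fin n) (u v : FreeGroup (Fin n)),
      d j (u * v) = d j u + MonoidAlgebra.of ℤ (FreeGroup (Fin n)) u * d j v)
    (j : Fin n) :
    ∑ i : Fin n,
        ((Finset.univ.filter (fun k : Fin n => k < i)).prod
            fun k => (tVar (c k) : LamRing μ))
          * psiC c (d j (β (FreeGroup.of i)))
      = (Finset.univ.filter (fun k : Fin n => k < j)).prod
          fun k => (tVar (c k) : LamRing μ) := by
  classical
  set f : Fin n → FreeGroup (Fin n) := fun i => β (FreeGroup.of i) with hf
  set l : List (FreeGroup (Fin n)) := List.ofFn f with hl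
  set l₀ : List (FreeGroup (Fin n)) := List.ofFn (fun i : Fin n => FreeGroup.of i) with hl₀
  set g : FreeGroup (Fin n) →* LamRing μ :=
    ((psiC c) : MonoidAlgebra ℤ (FreeGroup (Fin n)) →+* LamRing μ).toMonoidHom.comp
      (MonoidAlgebra.of ℤ (FreeGroup (Fin n))) with hgdef
  have hgapp : ∀ x, psiC c (MonoidAlgebra.of ℤ (FreeGroup (Fin n)) x) = g x := fun _ => rfl
  have hgen' : ∀ k : Fin n, g (FreeGroup.of k) = (tVar (c k) : LamRing μ) := by
    intro k
    simp [hgdef, psiC, MonoidAlgebra.lift_of]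
  have hβw : β l₀.prod = l.prod := by
    rw [show β l₀.prod = (l₀.map β).prod from map_list_prod β l₀, hl₀, List.map_ofFn, hl]
    rfl
  -- prefix products
  have hPfx : ∀ i : ℕ, i ≤ n → psiC c (MonoidAlgebra.of ℤ (FreeGroup (Fin n)) ((l.take i).prod))
      = ∏ k ∈ Finset.univ.filter (fun k : Fin n => (k : ℕ) < i), (tVar (c k) : LamRing μ) := by
    intro i hi
    rw [hgapp, map_list_prod, List.map_take, hl, List.map_ofFn]
    have hcomp : g ∘ f = fun k => (tVar (c k) : LamRing μ) := funext fun k => hβ k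
    rw [hcomp, take_prod_filter _ i hi]
  have hPfx₀ : ∀ i : ℕ, i ≤ n → psiC c (MonoidAlgebra.of ℤ (FreeGroup (Fin n)) ((l₀.take i).prod))
      = ∏ k ∈ Finset.univ.filter (fun k : Fin n => (k : ℕ) < i), (tVar (c k) : LamRing μ) := by
    intro i hi
    rw [hgapp, map_list_prod, List.map_take, hl₀, List.map_ofFn]
    have hcomp : (g ∘ fun i : Fin n => FreeGroup.of i) = fun k => (tVar (c k) : LamRing μ) :=
      funext fun k => hgen' k
    rw [hcomp, take_prod_filter _ i hi]
  have hlen : l.length = n := by simp [hl]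
  have hlen₀ : l₀.length = n := by simp [hl₀]
  -- LHS = psiC (d j l.prod)
  have hL : psiC c (d j l.prod)
      = ∑ i : Fin n,
        ((Finset.univ.filter (fun k : Fin n => k < i)).prod
            fun k => (tVar (c k) : LamRing μ))
          * psiC c (d j (β (FreeGroup.of i))) := by
    rw [d_list (d j) (hprod j) l, map_sum, hlen, ← Fin.sum_univ_eq_sum_range]
    refine Finset.sum_congr rfl fun i _ => ?_
    have hget : l.getD i.val 1 = β (FreeGroup.of i) := by
      rw [List.getD_eq_getElem _ _ (by rw [hlen]; exact i.isLt)]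
      simp [hl, hf]
    rw [map_mul, hPfx i.val i.isLt.le, hget]
    refine congrArg₂ (· * ·) ?_ rfl
    exact Finset.prod_congr (by ext k; simp only [Finset.mem_filter, Finset.mem_univ, true_and, Fin.lt_def]) fun _ _ => rfl
  -- RHS
  have hR : psiC c (d j l₀.prod)
      = (Finset.univ.filter (fun k : Fin n => k < j)).prod
          fun k => (tVar (c k) : LamRing μ) := by
    rw [d_list (d j) (hprod j) l₀, map_sum, hlen₀, ← Fin.sum_univ_eq_sum_range]
    have hterm : ∀ i : Fin n,
        psiC c (MonoidAlgebra.of ℤ (FreeGroup (Fin n)) ((l₀.take i.val).prod) * d j (l₀.getD i.val 1))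
        = if i = j then psiC c (MonoidAlgebra.of ℤ (FreeGroup (Fin n)) ((l₀.take i.val).prod)) else 0 := by
      intro i
      have hget : l₀.getD i.val 1 = FreeGroup.of i := by
        rw [List.getD_eq_getElem _ _ (by rw [hlen₀]; exact i.isLt)]
        simp [hl₀]
      rw [hget, map_mul, hgen]
      by_cases hij : i = j
      · rw [if_pos hij, if_pos hij, map_one, mul_one]
      · rw [if_neg hij, if_neg hij, map_zero, mul_zero]
    rw [Finset.sum_congr rfl fun i _ => hterm i]
    rw [Finset.sum_ite_eq' Finset.univ j]
    simp only [Finset.mem_univ, if_true]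
    rw [hPfx₀ j.val j.isLt.le]
    exact Finset.prod_congr (by ext k; simp only [Finset.mem_filter, Finset.mem_univ, true_and, Fin.lt_def]) fun _ _ => rfl
  rw [← hL, ← hβw, hfix]
  exact hR

end
end

section
/- Let M be an n×n matrix over a commutative ring R, let v ∈ Rⁿ with entries v_i = t_{c_i} − 1 (t_{c_i} ∈ R units), and suppose every row of M satisfies Σ_j M_{ij} v_j = v_i (i.e., Mv = v). Define the minor determinants 𝔅(l,m) := det((M − I) with row l and column m deleted). Then for all indices i ≠ m: (t_{c_i} − 1)·𝔅(l,m) = (−1)^{i+m}(t_{c_m} − 1)·𝔅(l,i). -/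
open Matrix

private lemma det_updateRow_pisingle {R : Type*} [CommRing R] {n : ℕ}
    (A : Matrix (Fin (n + 1)) (Fin (n + 1)) R) (l j : Fin (n + 1)) :
    (A.updateRow l (Pi.single j 1)).det
      = (-1 : R) ^ ((l : ℕ) + (j : ℕ)) * (A.submatrix l.succAbove j.succAbove).det := by
  rw [Matrix.det_succ_row _ l]
  rw [Finset.sum_eq_single j]
  · have hsub : (A.updateRow l (Pi.single j 1)).submatrix l.succAbove j.succAbove
        = A.submatrix l.succAbove j.succAbove := by
      ext a b
      simp [Matrix.submatrix_apply, Matrix.updateRow_apply, Fin.succAbove_ne l a]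
    rw [hsub]
    simp [mul_assoc]
  · intro b _ hb
    simp [Matrix.updateRow_apply, Pi.single_eq_of_ne hb]
  · intro h
    exact absurd (Finset.mem_univ j) h

private lemma det_updateCol_pisingle {R : Type*} [CommRing R] {n : ℕ}
    (A : Matrix (Fin (n + 1)) (Fin (n + 1)) R) (l j : Fin (n + 1)) :
    (A.updateCol j (Pi.single l 1)).det
      = (-1 : R) ^ ((l : ℕ) + (j : ℕ)) * (A.submatrix l.succAbove j.succAbove).det := by
  rw [← Matrix.det_transpose, ← Matrix.updateRow_transpose,
    det_updateRow_pisingle, add_comm (j : ℕ), ← Matrix.transpose_submatrix,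
    Matrix.det_transpose]

/-- Minor relation (column case of Lemma `HeusenerKrollLemme221`): if `M v = v`
for the vector `v` with entries `t_{c_i} − 1`, then the minors
`𝔅(l,m) = det((M − I) with row l, column m deleted)` satisfy
`(t_{c_i} − 1)·𝔅(l,m) = (−1)^{i+m}(t_{c_m} − 1)·𝔅(l,i)` for `i ≠ m`. -/
theorem minor_column_relation {R : Type*} [CommRing R] {n : ℕ}
    (M : Matrix (Fin (n + 1)) (Fin (n + 1)) R) (t : Fin (n + 1) → Rˣ)
    (hM : M.mulVec (fun j => (t j : R) - 1) = fun j => (t j : R) - 1)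
    (l m i : Fin (n + 1)) (him : i ≠ m) :
    ((t i : R) - 1) * ((M - 1).submatrix l.succAbove m.succAbove).det
      = (-1 : R) ^ ((i : ℕ) + (m : ℕ)) * ((t m : R) - 1)
          * ((M - 1).submatrix l.succAbove i.succAbove).det := by
  set v : Fin (n + 1) → R := fun j => (t j : R) - 1 with hv
  set A : Matrix (Fin (n + 1)) (Fin (n + 1)) R := M - 1 with hA
  have hAv : A *ᵥ v = 0 := by
    rw [hA, Matrix.sub_mulVec, hM, Matrix.one_mulVec, sub_self]
  set B : Matrix (Fin (n + 1)) (Fin (n + 1)) R := A.updateRow l (Pi.single m 1) with hB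
  -- B *ᵥ v = v m • e_l
  have hBv : B *ᵥ v = v m • (Pi.single l 1 : Fin (n + 1) → R) := by
    funext k
    by_cases hk : k = l
    · subst hk
      simp only [hB, Matrix.mulVec, dotProduct, Matrix.updateRow_apply, if_pos rfl]
      simp [Pi.single_apply]
    · have h1 : (B *ᵥ v) k = (A *ᵥ v) k := by
        simp only [hB, Matrix.mulVec, dotProduct, Matrix.updateRow_apply, if_neg hk]
      rw [h1, hAv]
      simp [Pi.single_eq_of_ne hk]
  -- cramer identity
  have hcr : cramer B (B *ᵥ v) = B.det • v := by
    rw [Matrix.cramer_eq_adjugate_mulVec, Matrix.mulVec_mulVec, Matrix.adjugate_mul,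
      Matrix.smul_mulVec, Matrix.one_mulVec]
  rw [hBv] at hcr
  have hkey := congrFun hcr i
  have hlin : cramer B (v m • (Pi.single l 1 : Fin (n + 1) → R)) i = v m * cramer B (Pi.single l 1) i := by
    rw [_root_.map_smul]; rfl
  rw [hlin] at hkey
  -- identify the two determinants with signed minors
  have hC : cramer B (Pi.single l 1) i
      = (-1 : R) ^ ((l : ℕ) + (i : ℕ)) * (A.submatrix l.succAbove i.succAbove).det := by
    rw [Matrix.cramer_apply, det_updateCol_pisingle B l i]
    have hsub : B.submatrix l.succAbove i.succAbove = A.submatrix l.succAbove i.succAbove := by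
      ext a b
      simp [hB, Matrix.submatrix_apply, Matrix.updateRow_apply, Fin.succAbove_ne l a]
    rw [hsub]
  have hD : B.det = (-1 : R) ^ ((l : ℕ) + (m : ℕ)) * (A.submatrix l.succAbove m.succAbove).det :=
    det_updateRow_pisingle A l m
  rw [hC, hD] at hkey
  -- hkey : v m * ((-1)^(l+i) * X) = ((-1)^(l+m) * Y) • v i  (smul = mul)
  have hkey' : v m * ((-1 : R) ^ ((l : ℕ) + (i : ℕ)) * (A.submatrix l.succAbove i.succAbove).det)
      = ((-1 : R) ^ ((l : ℕ) + (m : ℕ)) * (A.submatrix l.succAbove m.succAbove).det) * v i := by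
    simpa using hkey
  have hsign : (-1 : R) ^ ((l : ℕ) + (m : ℕ)) * (-1 : R) ^ ((l : ℕ) + (i : ℕ))
      = (-1 : R) ^ ((i : ℕ) + (m : ℕ)) := by
    rw [← pow_add]
    have h2 : (l : ℕ) + m + ((l : ℕ) + i) = 2 * l + ((i : ℕ) + m) := by ring
    rw [h2, pow_add, pow_mul]
    norm_num
  have hsq : (-1 : R) ^ ((l : ℕ) + (m : ℕ)) * (-1 : R) ^ ((l : ℕ) + (m : ℕ)) = 1 := by
    rw [← pow_add, ← two_mul, pow_mul]
    norm_num
  calc ((t i : R) - 1) * ((M - 1).submatrix l.succAbove m.succAbove).det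
      = (-1 : R) ^ ((l : ℕ) + (m : ℕ)) * (-1 : R) ^ ((l : ℕ) + (m : ℕ))
        * (v i * (A.submatrix l.succAbove m.succAbove).det) := by rw [hsq]; ring
    _ = (-1 : R) ^ ((l : ℕ) + (m : ℕ))
        * (v m * ((-1 : R) ^ ((l : ℕ) + (i : ℕ)) * (A.submatrix l.succAbove i.succAbove).det)) := by
        rw [hkey']; ring
    _ = ((-1 : R) ^ ((l : ℕ) + (m : ℕ)) * (-1 : R) ^ ((l : ℕ) + (i : ℕ)))
        * (v m * (A.submatrix l.succAbove i.succAbove).det) := by ring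
    _ = (-1 : R) ^ ((i : ℕ) + (m : ℕ)) * ((t m : R) - 1)
          * ((M - 1).submatrix l.succAbove i.succAbove).det := by rw [hsign]; ring
end

section
/- Crossing-change identity for the Gassner matrix of σ₁²: let ω ∈ ℂ* and let G(σ₁²) = [[1 − ω + ω², ω(1 − ω)], [1 − ω, ω]] ⊕ I_{n−2}. Let M = [[A,B],[C,D]] be an n×n complex matrix with A 2×2. Write minors 𝔅(N; l, m) := det((N − I_n) with row l, column m deleted). Assume (as follows from the row-sum relations) that −𝔅(M; 2, 1) = ω·𝔅(M; 1, 1). Then 𝔅(G(σ₁²)·M; 1, 1) = ω²·𝔅(M; 1, 1) + (ω − 1)·det(D − I_{n−2}). -/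
open Matrix

noncomputable section

/-- The minor `𝔅(N; l, m)`: the determinant of `N − I` with row `l` and column
`m` deleted. -/
def minorB {n : ℕ} (N : Matrix (Fin (n + 2)) (Fin (n + 2)) ℂ) (l m : Fin (n + 2)) : ℂ :=
  ((N - 1).submatrix l.succAbove m.succAbove).det

/-- The (unreduced) Gassner matrix of `σ₁²` at `ω`:
`[[1−ω+ω², ω(1−ω)],[1−ω, ω]] ⊕ I_{n}` as an `(n+2)×(n+2)` matrix. -/
def gassnerSigmaOneSq (n : ℕ) (ω : ℂ) : Matrix (Fin (n + 2)) (Fin (n + 2)) ℂ :=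
  Matrix.of fun i j =>
    if i = 0 ∧ j = 0 then 1 - ω + ω ^ 2
    else if i = 0 ∧ j = 1 then ω * (1 - ω)
    else if i = 1 ∧ j = 0 then 1 - ω
    else if i = 1 ∧ j = 1 then ω
    else if i = j then 1 else 0

/-- Lemma `HeusenerKrollLemma223`: with `D` the lower-right `n×n` block of `M`
and assuming `−𝔅(M;2,1) = ω·𝔅(M;1,1)`, one has
`𝔅(G(σ₁²)·M; 1, 1) = ω²·𝔅(M;1,1) + (ω−1)·det(D − I)`. -/
theorem gassner_crossing_change_minor (n : ℕ) (ω : ℂ) (hω : ω ≠ 0)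
    (M : Matrix (Fin (n + 2)) (Fin (n + 2)) ℂ)
    (D : Matrix (Fin n) (Fin n) ℂ)
    (hD : D = Matrix.of fun i j : Fin n =>
      M ⟨(i : ℕ) + 2, Nat.add_lt_add_right i.isLt 2⟩
        ⟨(j : ℕ) + 2, Nat.add_lt_add_right j.isLt 2⟩)
    (hminor : minorB M 1 0 = -ω * minorB M 0 0) :
    minorB (gassnerSigmaOneSq n ω * M) 0 0
      = ω ^ 2 * minorB M 0 0 + (ω - 1) * (D - 1).det := by
  have h1 : ∀ x : Fin n, (1 : Fin (n+2)) ≠ x.succ.succ := fun x => (Fin.succ_succ_ne_one x).symm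
  have h0 : ∀ x : Fin (n+1), (0 : Fin (n+2)) ≠ x.succ := fun x => (Fin.succ_ne_zero x).symm
  have hrow1 : ∀ c : Fin (n+2), (gassnerSigmaOneSq n ω * M) 1 c
      = (1 - ω) * M 0 c + ω * M 1 c := by
    intro c
    simp [gassnerSigmaOneSq, Matrix.mul_apply, Fin.sum_univ_succ, Fin.succ_ne_zero,
      Fin.succ_zero_eq_one, h1, Fin.succ_succ_ne_one]
  have hrowi : ∀ i : Fin n, ∀ c : Fin (n+2),
      (gassnerSigmaOneSq n ω * M) i.succ.succ c = M i.succ.succ c := by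
    intro i c
    simp [gassnerSigmaOneSq, Matrix.mul_apply, Fin.succ_ne_zero, h0, h1,
      Fin.succ_succ_ne_one]
  have ha0 : ((1 : Fin (n+2)).succAbove 0) = 0 := by
    simp [Fin.succAbove]
  have ha1 : ∀ i : Fin n, ((1 : Fin (n+2)).succAbove i.succ) = i.succ.succ := by
    intro i
    simp [Fin.succAbove, Fin.succ_ne_zero]
  -- T : the minor matrix for 𝔅(M;0,0)
  set T : Matrix (Fin (n+1)) (Fin (n+1)) ℂ := (M - 1).submatrix Fin.succ Fin.succ with hTdef
  set v : Fin (n+1) → ℂ := fun j => M 0 j.succ with hv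
  set e : Fin (n+1) → ℂ := fun j => if j = 0 then 1 else 0 with he
  have hT00 : minorB M 0 0 = T.det := by
    rw [minorB, Fin.succAbove_zero]
  -- Step 1: the minor matrix of G*M
  have hS : (gassnerSigmaOneSq n ω * M - 1).submatrix Fin.succ Fin.succ
      = T.updateRow 0 (ω • T 0 + (1 - ω) • (v + (-1 : ℂ) • e)) := by
    ext i j
    induction i using Fin.cases with
    | zero =>
      simp only [submatrix_apply, Matrix.sub_apply, Matrix.one_apply, updateRow_self,
        Pi.add_apply, Pi.smul_apply, smul_eq_mul, hTdef, hv, he, Fin.succ_zero_eq_one]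
      rw [hrow1]
      have h1j : ((1 : Fin (n+2)) = j.succ) ↔ (j = 0) := by
        rw [show (1 : Fin (n+2)) = (0 : Fin (n+1)).succ from rfl, Fin.succ_inj, eq_comm]
      simp only [h1j]
      by_cases hj : j = 0
      · subst hj; simp; ring
      · simp [hj, fun h : (0 : Fin (n+1)) = j => hj h.symm]; ring
    | succ i =>
      have hne : (i.succ : Fin (n+1)) ≠ 0 := Fin.succ_ne_zero i
      simp only [submatrix_apply, updateRow_ne hne, hTdef, Matrix.sub_apply]
      rw [hrowi]
  -- Step 2: split the determinant
  have hdet : minorB (gassnerSigmaOneSq n ω * M) 0 0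
      = ω * T.det + (1 - ω) * ((T.updateRow 0 v).det - (T.updateRow 0 e).det) := by
    rw [minorB, Fin.succAbove_zero, hS, det_updateRow_add, det_updateRow_smul,
      det_updateRow_smul, det_updateRow_add, det_updateRow_smul, updateRow_eq_self]
    ring
  -- Step 3: updateRow T 0 v is the minor for 𝔅(M;1,0)
  have hU : (T.updateRow 0 v) = (M - 1).submatrix ((1 : Fin (n+2)).succAbove) Fin.succ := by
    ext i j
    induction i using Fin.cases with
    | zero =>
      simp only [updateRow_self, hv, submatrix_apply, ha0, Matrix.sub_apply, Matrix.one_apply,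
        h0 j, if_false, sub_zero]
    | succ i =>
      have hne : (i.succ : Fin (n+1)) ≠ 0 := Fin.succ_ne_zero i
      simp only [updateRow_ne hne, hTdef, submatrix_apply, ha1 i]
  have hminor10 : (T.updateRow 0 v).det = minorB M 1 0 := by
    rw [hU, minorB, Fin.succAbove_zero]
  -- Step 4: updateRow T 0 e has determinant det (D - 1)
  have hE : (T.updateRow 0 e).det = (D - 1).det := by
    rw [det_succ_row_zero]
    rw [Finset.sum_eq_single (0 : Fin (n+1))]
    · have hsub : ((T.updateRow 0 e).submatrix Fin.succ (Fin.succAbove 0)) = D - 1 := by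
        ext i j
        have hne : (i.succ : Fin (n+1)) ≠ 0 := Fin.succ_ne_zero i
        simp only [submatrix_apply, Fin.succAbove_zero, updateRow_ne hne, hTdef,
          Matrix.sub_apply, Matrix.one_apply, hD, Matrix.of_apply]
        have hM : M i.succ.succ j.succ.succ
            = M ⟨(i : ℕ) + 2, Nat.add_lt_add_right i.isLt 2⟩
                ⟨(j : ℕ) + 2, Nat.add_lt_add_right j.isLt 2⟩ := by
          congr 1 <;> exact Fin.ext (by simp)
        rw [hM]
        have hiff : (i.succ.succ = j.succ.succ) ↔ (i = j) := by
          rw [Fin.succ_inj, Fin.succ_inj]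
        simp only [hiff]
      rw [hsub]
      simp [he]
    · intro b _ hb
      simp [he, hb]
    · simp
  rw [hdet, hminor10, hminor, hE, hT00]
  ring

end
end

section
/- Suppose (X₁, X₂, Y₁, Y₂) ∈ SU(2)⁴ with Tr(Xᵢ) = Tr(Yᵢ) = 2cos(α) for α ∈ (0,π), α ≠ π/2, and X₁X₂ = Y₁Y₂. If X₁ = X₂ = diag(e^{iα}, e^{−iα}), then Y₁ = Y₂ = diag(e^{iα}, e^{−iα}). -/
open Matrix Complex

/-- Degeneracy at `θ₁ = 0` in the pillowcase parametrization (Lemma `HKLemma41`,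
case `α ≠ π/2`): if `X₁ = X₂ = diag(e^{iα}, e^{−iα})` and `(X₁,X₂,Y₁,Y₂)` lies in
`H₂^α` (all traces `2cos α`, `X₁X₂ = Y₁Y₂`), then `Y₁ = Y₂ = diag(e^{iα}, e^{−iα})`. -/
theorem pillowcase_degenerate_corner (α : ℝ) (hα : α ∈ Set.Ioo 0 Real.pi)
    (hα' : α ≠ Real.pi / 2)
    (X₁ X₂ Y₁ Y₂ : Matrix (Fin 2) (Fin 2) ℂ)
    (hX₁m : X₁ ∈ Matrix.specialUnitaryGroup (Fin 2) ℂ)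
    (hX₂m : X₂ ∈ Matrix.specialUnitaryGroup (Fin 2) ℂ)
    (hY₁m : Y₁ ∈ Matrix.specialUnitaryGroup (Fin 2) ℂ)
    (hY₂m : Y₂ ∈ Matrix.specialUnitaryGroup (Fin 2) ℂ)
    (htX₁ : Matrix.trace X₁ = 2 * (Real.cos α : ℂ))
    (htX₂ : Matrix.trace X₂ = 2 * (Real.cos α : ℂ))
    (htY₁ : Matrix.trace Y₁ = 2 * (Real.cos α : ℂ))
    (htY₂ : Matrix.trace Y₂ = 2 * (Real.cos α : ℂ))
    (hprod : X₁ * X₂ = Y₁ * Y₂)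
    (hX₁ : X₁ = !![Complex.exp (Complex.I * α), 0; 0, Complex.exp (-(Complex.I * α))])
    (hX₂ : X₂ = !![Complex.exp (Complex.I * α), 0; 0, Complex.exp (-(Complex.I * α))]) :
    Y₁ = !![Complex.exp (Complex.I * α), 0; 0, Complex.exp (-(Complex.I * α))] ∧
    Y₂ = !![Complex.exp (Complex.I * α), 0; 0, Complex.exp (-(Complex.I * α))] := by
  obtain ⟨hαpos, hαlt⟩ := hα
  have hπ := Real.pi_pos
  set E : ℂ := Complex.exp (Complex.I * α) with hE
  set E' : ℂ := Complex.exp (-(Complex.I * α)) with hE'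
  have hEE' : E * E' = 1 := by
    rw [hE, hE', ← Complex.exp_add]; simp
  have hconjE : (starRingEnd ℂ) E = E' := by
    rw [hE, hE', ← Complex.exp_conj]
    congr 1
    simp [_root_.map_mul, Complex.conj_I, Complex.conj_ofReal]
  have hconjE' : (starRingEnd ℂ) E' = E := by
    rw [hE, hE', ← Complex.exp_conj]
    congr 1
    simp [_root_.map_mul, Complex.conj_I, Complex.conj_ofReal]
  have h2cos : (2 : ℂ) * (Real.cos α : ℂ) = E + E' := by
    rw [Complex.ofReal_cos, Complex.cos, hE, hE']
    rw [mul_comm Complex.I (α : ℂ)]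
    ring
  -- unitarity facts about Y₁
  obtain ⟨hY₁u, hY₁d⟩ := Matrix.mem_specialUnitaryGroup_iff.mp hY₁m
  have hs1 : Y₁ * star Y₁ = 1 := Matrix.mem_unitaryGroup_iff.mp hY₁u
  have hs1' : star Y₁ * Y₁ = 1 := Matrix.mem_unitaryGroup_iff'.mp hY₁u
  have hadj : star Y₁ = Matrix.adjugate Y₁ := by
    have h2 : Y₁ * Matrix.adjugate Y₁ = 1 := by
      rw [Matrix.mul_adjugate, hY₁d, one_smul]
    rw [← Matrix.inv_eq_right_inv hs1, Matrix.inv_eq_right_inv h2]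
  set a : ℂ := Y₁ 0 0 with ha0
  set b : ℂ := Y₁ 0 1 with hb0
  have hd : Y₁ 1 1 = (starRingEnd ℂ) a := by
    have h00 := congrFun (congrFun hadj 0) 0
    simp [Matrix.star_apply, Matrix.adjugate_fin_two] at h00
    exact h00.symm
  have hc : Y₁ 1 0 = -(starRingEnd ℂ) b := by
    have h01 := congrFun (congrFun hadj 0) 1
    simp [Matrix.star_apply, Matrix.adjugate_fin_two] at h01
    have := congrArg (starRingEnd ℂ) h01
    simpa using this
  -- Y₂ determined by Y₁
  have hD2 : X₁ * X₂ = !![E ^ 2, 0; 0, E' ^ 2] := by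
    rw [hX₁, hX₂]
    ext i j
    fin_cases i <;> fin_cases j <;>
      simp [Matrix.mul_apply, Fin.sum_univ_two] <;> ring
  have hY₂eq : Y₂ = star Y₁ * !![E ^ 2, 0; 0, E' ^ 2] := by
    calc Y₂ = (star Y₁ * Y₁) * Y₂ := by rw [hs1', one_mul]
      _ = star Y₁ * (X₁ * X₂) := by rw [mul_assoc, ← hprod]
      _ = _ := by rw [hD2]
  have e00 : Y₂ 0 0 = (starRingEnd ℂ) a * E ^ 2 := by
    rw [hY₂eq]
    simp [Matrix.mul_apply, Fin.sum_univ_two, Matrix.star_apply, ← ha0]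
  have e11 : Y₂ 1 1 = a * E' ^ 2 := by
    rw [hY₂eq]
    simp [Matrix.mul_apply, Fin.sum_univ_two, Matrix.star_apply, hd]
  -- trace equations
  have h1 : a + (starRingEnd ℂ) a = E + E' := by
    rw [Matrix.trace_fin_two, hd] at htY₁
    linear_combination htY₁ + h2cos
  have h2 : (starRingEnd ℂ) a * E ^ 2 + a * E' ^ 2 = E + E' := by
    rw [Matrix.trace_fin_two, e00, e11] at htY₂
    linear_combination htY₂ + h2cos
  -- E² ≠ 1
  have hE2ne : E ^ 2 ≠ 1 := by
    have h2exp : E ^ 2 = Complex.exp (((2 * α : ℝ) : ℂ) * Complex.I) := by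
      rw [hE, sq, ← Complex.exp_add]
      push_cast
      ring_nf
    intro h
    rw [h2exp, Complex.exp_eq_one_iff] at h
    obtain ⟨n, hn⟩ := h
    have hn' : ((2 * α : ℝ) : ℂ) = ((n * (2 * Real.pi) : ℝ) : ℂ) := by
      have h' : ((2 * α : ℝ) : ℂ) * Complex.I = ((n * (2 * Real.pi) : ℝ) : ℂ) * Complex.I := by
        push_cast
        push_cast at hn
        linear_combination hn
      exact mul_right_cancel₀ Complex.I_ne_zero h'
    have hr : 2 * α = n * (2 * Real.pi) := Complex.ofReal_inj.mp hn'
    rcases lt_trichotomy (n : ℝ) 0 with h | h | h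
    · nlinarith
    · nlinarith
    · have hn1 : (0 : ℤ) < n := by exact_mod_cast h
      have : (1 : ℝ) ≤ (n : ℝ) := by exact_mod_cast hn1
      nlinarith
  -- cos α ≠ 0
  have hcosne : (Real.cos α : ℝ) ≠ 0 := by
    intro h
    rw [Real.cos_eq_zero_iff] at h
    obtain ⟨k, hk⟩ := h
    have hk0 : (-1 : ℝ) < (k : ℝ) := by nlinarith
    have hk1 : (k : ℝ) < 1 := by nlinarith
    have hk0' : (-1 : ℤ) < k := by exact_mod_cast hk0
    have hk1' : k < (1 : ℤ) := by exact_mod_cast hk1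
    have : k = 0 := by omega
    rw [this] at hk
    norm_num at hk
    exact hα' hk
  have hEne : E + E' ≠ 0 := by
    rw [← h2cos]
    intro h
    rcases mul_eq_zero.mp h with h' | h'
    · norm_num at h'
    · exact hcosne (by exact_mod_cast h')
  have hEE2 : E ^ 2 * E' ^ 2 = 1 := by
    calc E ^ 2 * E' ^ 2 = (E * E') ^ 2 := by ring
      _ = 1 := by rw [hEE']; ring
  -- key: conj a = a E'²
  have key : (starRingEnd ℂ) a = a * E' ^ 2 := by
    have hfac : ((starRingEnd ℂ) a - a * E' ^ 2) * (E ^ 2 - 1) = 0 := by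
      linear_combination h2 - h1 - a * hEE2
    rcases mul_eq_zero.mp hfac with h | h
    · exact sub_eq_zero.mp h
    · exact absurd (sub_eq_zero.mp h) hE2ne
  -- a = E
  have ha : a = E := by
    have hfac2 : (a * E' - 1) * (E + E') = 0 := by
      linear_combination a * hEE' + h1 - key
    rcases mul_eq_zero.mp hfac2 with h | h
    · have hA : a * E' = 1 := sub_eq_zero.mp h
      linear_combination E * hA - a * hEE'
    · exact absurd h hEne
  -- b = 0
  have hb : b = 0 := by
    have hdet := hY₁d
    rw [Matrix.det_fin_two] at hdet
    rw [hd, hc] at hdet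
    have haa : a * (starRingEnd ℂ) a = 1 := by rw [ha, hconjE]; exact hEE'
    have hbb : b * (starRingEnd ℂ) b = 0 := by linear_combination hdet - haa
    rcases mul_eq_zero.mp hbb with h | h
    · exact h
    · simpa using congrArg (starRingEnd ℂ) h
  have hY₁eq : Y₁ = !![E, 0; 0, E'] := by
    ext i j
    fin_cases i <;> fin_cases j <;>
      simp [← ha0, ← hb0, ha, hb, hd, hc, hconjE]
  refine ⟨hY₁eq, ?_⟩
  rw [hY₂eq, hY₁eq]
  ext i j
  fin_cases i <;> fin_cases j <;>
    simp [Matrix.mul_apply, Fin.sum_univ_two, Matrix.star_apply, hconjE, hconjE'] <;>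
    first
    | linear_combination E * hEE'
    | linear_combination E' * hEE'
end

section
/- Let H be an n×n Hermitian complex matrix with det H ≠ 0, and let H' = H − r·E_{kk} where r > 0 is real and E_{kk} is the matrix with a single 1 in position (k,k). If det H' ≠ 0, then the difference of signatures sign(H') − sign(H) is either 0 or −2. -/
open Matrix Finset

noncomputable section

namespace SigAux

variable {n : ℕ} {A : Matrix (Fin n) (Fin n) ℂ}

/-- Coordinate subspace: vectors supported on `s`. -/
def coordSub (s : Finset (Fin n)) : Submodule ℂ (Fin n → ℂ) :=
  LinearMap.ker (LinearMap.funLeft ℂ ℂ ((↑) : {i : Fin n // i ∉ s} → Fin n))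

lemma mem_coordSub {s : Finset (Fin n)} {x : Fin n → ℂ} :
    x ∈ coordSub s ↔ ∀ i ∉ s, x i = 0 := by
  simp [coordSub, LinearMap.mem_ker, LinearMap.funLeft, funext_iff, Subtype.forall]

lemma finrank_coordSub (s : Finset (Fin n)) :
    Module.finrank ℂ (coordSub s) = s.card := by
  classical
  have hsurj : Function.Surjective
      (LinearMap.funLeft ℂ ℂ ((↑) : {i : Fin n // i ∉ s} → Fin n)) :=
    LinearMap.funLeft_surjective_of_injective ℂ ℂ _ Subtype.val_injective
  have h := LinearMap.finrank_range_add_finrank_ker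
    (LinearMap.funLeft ℂ ℂ ((↑) : {i : Fin n // i ∉ s} → Fin n))
  rw [LinearMap.range_eq_top.2 hsurj, finrank_top] at h
  have h1 : Module.finrank ℂ ({i : Fin n // i ∉ s} → ℂ) = n - s.card := by
    rw [Module.finrank_fintype_fun_eq_card]
    simp [Fintype.card_subtype_compl, Fintype.card_fin]
  have h2 : Module.finrank ℂ (Fin n → ℂ) = n := by
    simp [Module.finrank_fintype_fun_eq_card]
  have hc : s.card ≤ n := by simpa using s.card_le_univ
  rw [h1, h2] at h
  unfold coordSub
  omega

/-- Coordinates with respect to the eigenbasis. -/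
def coords (hA : A.IsHermitian) : (Fin n → ℂ) ≃ₗ[ℂ] (Fin n → ℂ) :=
  LinearEquiv.ofLinear
    (Matrix.mulVecLin (star (hA.eigenvectorUnitary : Matrix (Fin n) (Fin n) ℂ)))
    (Matrix.mulVecLin (hA.eigenvectorUnitary : Matrix (Fin n) (Fin n) ℂ))
    (by rw [← Matrix.mulVecLin_mul, Unitary.coe_star_mul_self, Matrix.mulVecLin_one])
    (by
      have h : (hA.eigenvectorUnitary : Matrix (Fin n) (Fin n) ℂ)
          * star (hA.eigenvectorUnitary : Matrix (Fin n) (Fin n) ℂ) = 1 := by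
        simpa using unitary.coe_mul_star_self hA.eigenvectorUnitary
      rw [← Matrix.mulVecLin_mul, h, Matrix.mulVecLin_one])

lemma coords_apply (hA : A.IsHermitian) (x : Fin n → ℂ) :
    coords hA x = star (hA.eigenvectorUnitary : Matrix (Fin n) (Fin n) ℂ) *ᵥ x := rfl

lemma re_form (hA : A.IsHermitian) (x : Fin n → ℂ) :
    (star x ⬝ᵥ (A *ᵥ x)).re
      = ∑ i, hA.eigenvalues i * Complex.normSq (coords hA x i) := by
  set U : Matrix (Fin n) (Fin n) ℂ := (hA.eigenvectorUnitary : Matrix (Fin n) (Fin n) ℂ) with hU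
  set c : Fin n → ℂ := star U *ᵥ x with hc
  have key : star x ⬝ᵥ (A *ᵥ x) = star c ⬝ᵥ (diagonal (Complex.ofReal ∘ hA.eigenvalues) *ᵥ c) := by
    conv_lhs => rw [hA.spectral_theorem, Unitary.conjStarAlgAut_apply]
    rw [← Matrix.mulVec_mulVec, ← Matrix.mulVec_mulVec, dotProduct_mulVec]
    congr 1
    rw [hc, Matrix.star_mulVec]
    rw [Matrix.star_eq_conjTranspose, conjTranspose_conjTranspose]
  rw [key]
  have : star c ⬝ᵥ (diagonal (Complex.ofReal ∘ hA.eigenvalues) *ᵥ c)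
      = ∑ i, ((hA.eigenvalues i : ℂ) * (Complex.normSq (c i) : ℂ)) := by
    simp only [dotProduct, Matrix.mulVec_diagonal, Pi.star_apply, Function.comp]
    refine Finset.sum_congr rfl fun i _ => ?_
    rw [Complex.normSq_eq_conj_mul_self]
    rw [RCLike.star_def]
    ring
  rw [this, Complex.re_sum]
  refine Finset.sum_congr rfl fun i _ => ?_
  simp [coords_apply, ← hU, ← hc]

def posIdx (hA : A.IsHermitian) : Finset (Fin n) :=
  univ.filter fun i => 0 < hA.eigenvalues i

def Vpos (hA : A.IsHermitian) : Submodule ℂ (Fin n → ℂ) :=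
  (coordSub (posIdx hA)).comap (coords hA : (Fin n → ℂ) →ₗ[ℂ] (Fin n → ℂ))

def Vnpos (hA : A.IsHermitian) : Submodule ℂ (Fin n → ℂ) :=
  (coordSub ((posIdx hA)ᶜ)).comap (coords hA : (Fin n → ℂ) →ₗ[ℂ] (Fin n → ℂ))

lemma finrank_Vpos (hA : A.IsHermitian) :
    Module.finrank ℂ (Vpos hA) = (posIdx hA).card := by
  rw [Vpos, Submodule.comap_equiv_eq_map_symm, LinearEquiv.finrank_map_eq, finrank_coordSub]

lemma finrank_Vnpos (hA : A.IsHermitian) :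
    Module.finrank ℂ (Vnpos hA) = n - (posIdx hA).card := by
  rw [Vnpos, Submodule.comap_equiv_eq_map_symm, LinearEquiv.finrank_map_eq, finrank_coordSub,
    Finset.card_compl, Fintype.card_fin]

lemma pos_of_mem_Vpos (hA : A.IsHermitian) {x : Fin n → ℂ}
    (hx : x ∈ Vpos hA) (hx0 : x ≠ 0) : 0 < (star x ⬝ᵥ (A *ᵥ x)).re := by
  rw [re_form hA]
  have hc0 : coords hA x ≠ 0 := by
    intro h
    exact hx0 (by simpa using congrArg (coords hA).symm h)
  obtain ⟨j, hj⟩ : ∃ j, coords hA x j ≠ 0 := by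
    by_contra h
    push_neg at h
    exact hc0 (funext h)
  have hmem := (Submodule.mem_comap.mp hx)
  rw [mem_coordSub] at hmem
  simp only [LinearEquiv.coe_coe] at hmem
  refine Finset.sum_pos' (fun i _ => ?_) ⟨j, Finset.mem_univ j, ?_⟩
  · by_cases hi : i ∈ posIdx hA
    · have : 0 < hA.eigenvalues i := by simpa [posIdx] using hi
      exact mul_nonneg this.le (Complex.normSq_nonneg _)
    · rw [hmem i hi]
      simp
  · have hjmem : j ∈ posIdx hA := by
      by_contra hj'
      exact hj (hmem j hj')
    have h1 : 0 < hA.eigenvalues j := by simpa [posIdx] using hjmem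
    have h2 : 0 < Complex.normSq (coords hA x j) := by
      simpa [Complex.normSq_pos] using hj
    positivity

lemma nonpos_of_mem_Vnpos (hA : A.IsHermitian) {x : Fin n → ℂ}
    (hx : x ∈ Vnpos hA) : (star x ⬝ᵥ (A *ᵥ x)).re ≤ 0 := by
  rw [re_form hA]
  have hmem := (Submodule.mem_comap.mp hx)
  rw [mem_coordSub] at hmem
  simp only [LinearEquiv.coe_coe] at hmem
  refine Finset.sum_nonpos fun i _ => ?_
  by_cases hi : i ∈ posIdx hA
  · rw [hmem i (by simpa using hi)]
    simp
  · have : hA.eigenvalues i ≤ 0 := by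
      have := hi; simp [posIdx] at this; linarith
    have h2 : 0 ≤ Complex.normSq (coords hA x i) := Complex.normSq_nonneg _
    exact mul_nonpos_of_nonpos_of_nonneg this h2

/-- Any subspace on which the Hermitian form of `A` is positive definite has dimension
at most the number of positive eigenvalues of `A`. -/
lemma finrank_le_posIdx_card (hA : A.IsHermitian) (W : Submodule ℂ (Fin n → ℂ))
    (hW : ∀ x ∈ W, x ≠ 0 → 0 < (star x ⬝ᵥ (A *ᵥ x)).re) :
    Module.finrank ℂ W ≤ (posIdx hA).card := by
  have hd : Disjoint W (Vnpos hA) := by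
    rw [Submodule.disjoint_def]
    intro x hxW hxV
    by_contra h0
    exact absurd (nonpos_of_mem_Vnpos hA hxV) (not_le.mpr (hW x hxW h0))
  have hle := Submodule.finrank_add_finrank_le_of_disjoint hd
  rw [finrank_Vnpos] at hle
  have h2 : Module.finrank ℂ (Fin n → ℂ) = n := by
    simp [Module.finrank_fintype_fun_eq_card]
  rw [h2] at hle
  have hc : (posIdx hA).card ≤ n := by simpa using (posIdx hA).card_le_univ
  omega

lemma card_neg_eq (hA : A.IsHermitian) (hdet : A.det ≠ 0) :
    (univ.filter fun i => hA.eigenvalues i < 0).card = n - (posIdx hA).card := by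
  have hnz : ∀ i, hA.eigenvalues i ≠ 0 := by
    intro i hi
    apply hdet
    rw [hA.det_eq_prod_eigenvalues]
    exact Finset.prod_eq_zero (Finset.mem_univ i) (by rw [hi]; simp)
  have heq : (univ.filter fun i => hA.eigenvalues i < 0)
      = univ.filter fun i => ¬ 0 < hA.eigenvalues i := by
    ext i
    simp only [Finset.mem_filter, Finset.mem_univ, true_and, not_lt]
    constructor
    · exact le_of_lt
    · intro h; exact lt_of_le_of_ne h (hnz i)
  rw [heq]
  have := Finset.card_filter_add_card_filter_not (s := (univ : Finset (Fin n)))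
    (p := fun i => 0 < hA.eigenvalues i)
  simp only [Finset.card_univ, Fintype.card_fin] at this
  unfold posIdx
  omega

lemma re_form_sub (H : Matrix (Fin n) (Fin n) ℂ) (k : Fin n) (r : ℝ) (x : Fin n → ℂ) :
    (star x ⬝ᵥ ((H - Matrix.single k k (r : ℂ)) *ᵥ x)).re
      = (star x ⬝ᵥ (H *ᵥ x)).re - r * Complex.normSq (x k) := by
  rw [Matrix.sub_mulVec, dotProduct_sub, Complex.sub_re]
  congr 1
  have h1 : Matrix.single k k (r : ℂ) *ᵥ x
      = fun i => if i = k then (r : ℂ) * x k else 0 := by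
    ext i
    simp [Matrix.mulVec, Matrix.single, dotProduct, Finset.sum_ite_eq, eq_comm,
      Matrix.of_apply, ite_and]
  rw [h1]
  simp only [dotProduct, Pi.star_apply, mul_ite, mul_zero]
  rw [Finset.sum_ite_eq' univ k fun i => star (x i) * ((r:ℂ) * x k)]
  simp only [Finset.mem_univ, if_true]
  have : star (x k) * ((r:ℂ) * x k) = (r:ℂ) * ((starRingEnd ℂ) (x k) * x k) := by
    rw [RCLike.star_def]; ring
  rw [this, ← Complex.normSq_eq_conj_mul_self]
  simp [Complex.ofReal_mul]

end SigAux

open SigAux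

/-- The signature of a Hermitian matrix: the number of positive eigenvalues minus
the number of negative eigenvalues. -/
def hermSign {n : ℕ} {A : Matrix (Fin n) (Fin n) ℂ} (hA : A.IsHermitian) : ℤ := by
  classical
  exact ((Finset.univ.filter fun i => 0 < hA.eigenvalues i).card : ℤ)
    - ((Finset.univ.filter fun i => hA.eigenvalues i < 0).card : ℤ)

/-- Lemma `SignatureLemma`(2): subtracting a positive real `r` from one diagonal
entry of a nonsingular Hermitian matrix changes the signature by `0` or `−2`,
provided the result is again nonsingular. -/
theorem hermitian_sign_diag_perturbation {n : ℕ} (H : Matrix (Fin n) (Fin n) ℂ)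
    (hH : H.IsHermitian) (hdet : H.det ≠ 0) (k : Fin n) (r : ℝ) (hr : 0 < r)
    (H' : Matrix (Fin n) (Fin n) ℂ)
    (hH'def : H' = H - Matrix.single k k (r : ℂ))
    (hH' : H'.IsHermitian) (hdet' : H'.det ≠ 0) :
    hermSign hH' - hermSign hH = 0 ∨ hermSign hH' - hermSign hH = -2 := by
  classical
  set p : ℕ := (posIdx hH).card with hp
  set p' : ℕ := (posIdx hH').card with hp'
  -- quadratic form relation
  have hrel : ∀ x : Fin n → ℂ,
      (star x ⬝ᵥ (H' *ᵥ x)).re = (star x ⬝ᵥ (H *ᵥ x)).re - r * Complex.normSq (x k) := by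
    intro x
    rw [hH'def]
    exact re_form_sub H k r x
  -- p' ≤ p
  have h1 : p' ≤ p := by
    have hmax := finrank_le_posIdx_card hH (Vpos hH') (fun x hx hx0 => by
      have hpos := pos_of_mem_Vpos hH' hx hx0
      have h2 := hrel x
      have h3 : 0 ≤ r * Complex.normSq (x k) :=
        mul_nonneg hr.le (Complex.normSq_nonneg _)
      linarith)
    rw [finrank_Vpos hH'] at hmax
    exact hmax
  -- p ≤ p' + 1
  have h2 : p ≤ p' + 1 := by
    set g : (Vpos hH) →ₗ[ℂ] ℂ := (LinearMap.proj k).domRestrict (Vpos hH) with hg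
    set W : Submodule ℂ (Fin n → ℂ) := (LinearMap.ker g).map (Vpos hH).subtype with hWdef
    have hWrank : Module.finrank ℂ W = Module.finrank ℂ (LinearMap.ker g) :=
      Submodule.finrank_map_subtype_eq (Vpos hH) (LinearMap.ker g)
    have hrn := LinearMap.finrank_range_add_finrank_ker g
    rw [finrank_Vpos hH] at hrn
    have hr1 : Module.finrank ℂ (LinearMap.range g) ≤ 1 := by
      simpa using (LinearMap.range g).finrank_le
    have hWle : Module.finrank ℂ W ≤ p' := by
      refine finrank_le_posIdx_card hH' W (fun x hx hx0 => ?_)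
      obtain ⟨y, hy, rfl⟩ := Submodule.mem_map.mp hx
      have hyk : (y : Fin n → ℂ) k = 0 := by
        have := LinearMap.mem_ker.mp hy
        simpa [hg, LinearMap.domRestrict_apply] using this
      have hy0 : (y : Fin n → ℂ) ≠ 0 := by simpa using hx0
      have hpos := pos_of_mem_Vpos hH y.2 hy0
      have := hrel (y : Fin n → ℂ)
      rw [hyk] at this
      simpa [this] using hpos
    omega
  -- signatures in terms of p, p'
  have hcard : p ≤ n := by simpa using (posIdx hH).card_le_univ
  have hcard' : p' ≤ n := by simpa using (posIdx hH').card_le_univ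
  have hsH : hermSign hH = (p : ℤ) - ((n - p : ℕ) : ℤ) := by
    rw [hermSign, ← card_neg_eq hH hdet]
    rfl
  have hsH' : hermSign hH' = (p' : ℤ) - ((n - p' : ℕ) : ℤ) := by
    rw [hermSign, ← card_neg_eq hH' hdet']
    rfl
  rw [hsH, hsH']
  omega

end
end
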